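/- For φ ∈ (0, π), the function B_c(φ) = |1+(cos φ−1)e^{2πi/3}| is strictly increasing with range (1, √7), and the argument ψ_c(φ) = arg(1+(cos φ−1)e^{2πi/3}) is strictly decreasing with range (−arctan(√3/2), 0). -/

import Mathlib

open Real Set

noncomputable def α₂ (φ : ℝ) : ℂ :=
  1 + ((Real.cos φ : ℂ) - 1) * Complex.exp (2 * Real.pi * Complex.I / 3)

noncomputable def Bc (φ : ℝ) : ℝ := ‖α₂ φ‖

noncomputable def ψc (φ : ℝ) : ℝ := (α₂ φ).arg

lemma exp_eq : Complex.exp (2 * Real.pi * Complex.I / 3) =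
    Complex.exp ((((2 * Real.pi / 3 : ℝ)) : ℂ) * Complex.I) := by
  norm_num; ring_nf

lemma cos23 : Real.cos (2 * Real.pi / 3) = -(1/2) := by
  have : (2 : ℝ) * Real.pi / 3 = Real.pi - Real.pi / 3 := by ring
  rw [this, Real.cos_pi_sub, Real.cos_pi_div_three]

lemma sin23 : Real.sin (2 * Real.pi / 3) = Real.sqrt 3 / 2 := by
  have : (2 : ℝ) * Real.pi / 3 = Real.pi - Real.pi / 3 := by ring
  rw [this, Real.sin_pi_sub, Real.sin_pi_div_three]

lemma hEre : (Complex.exp (2 * Real.pi * Complex.I / 3)).re = -(1/2) := by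
  rw [exp_eq, Complex.exp_ofReal_mul_I_re, cos23]

lemma hEim : (Complex.exp (2 * Real.pi * Complex.I / 3)).im = Real.sqrt 3 / 2 := by
  rw [exp_eq, Complex.exp_ofReal_mul_I_im, sin23]

lemma alpha_re (φ : ℝ) : (α₂ φ).re = 1 + (1 - Real.cos φ) / 2 := by
  rw [α₂]
  simp only [Complex.add_re, Complex.one_re, Complex.mul_re, Complex.sub_re,
    Complex.sub_im, Complex.ofReal_re, Complex.ofReal_im, Complex.one_re,
    Complex.one_im, hEre, hEim]
  ring

lemma alpha_im (φ : ℝ) : (α₂ φ).im = -(Real.sqrt 3 * (1 - Real.cos φ)) / 2 := by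
  rw [α₂]
  simp only [Complex.add_im, Complex.one_im, Complex.mul_im, Complex.sub_re,
    Complex.sub_im, Complex.ofReal_re, Complex.ofReal_im, Complex.one_re,
    hEre, hEim]
  ring

lemma cos_lt (φ : ℝ) : Real.cos φ ≤ 1 := Real.cos_le_one φ
lemma cos_gt (φ : ℝ) : -1 ≤ Real.cos φ := Real.neg_one_le_cos φ

lemma Bc_eq (φ : ℝ) : Bc φ = Real.sqrt (3 - 3 * Real.cos φ + Real.cos φ ^ 2) := by
  have h3 : (Real.sqrt 3) ^ 2 = 3 := Real.sq_sqrt (by norm_num)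
  have hsq : Bc φ ^ 2 = 3 - 3 * Real.cos φ + Real.cos φ ^ 2 := by
    rw [Bc, Complex.sq_norm, Complex.normSq_apply, alpha_re, alpha_im]
    nlinarith [h3]
  nth_rewrite 1 [← Real.sqrt_sq (show (0:ℝ) ≤ Bc φ from norm_nonneg _)]
  rw [hsq]

lemma psi_eq (φ : ℝ) : ψc φ =
    -Real.arctan (Real.sqrt 3 * (1 - Real.cos φ) / (3 - Real.cos φ)) := by
  have hre : 0 < (α₂ φ).re := by rw [alpha_re]; nlinarith [cos_lt φ]
  have habs : |(α₂ φ).arg| < Real.pi / 2 :=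
    Complex.abs_arg_lt_pi_div_two_iff.mpr (Or.inl hre)
  rw [abs_lt] at habs
  have := Real.arctan_tan (x := (α₂ φ).arg) habs.1 habs.2
  rw [ψc, ← this, Complex.tan_arg, alpha_re, alpha_im]
  rw [← Real.arctan_neg]
  congr 1
  have h1 : (0:ℝ) < 1 + (1 - Real.cos φ)/2 := by nlinarith [cos_lt φ]
  have h2 : (0:ℝ) < 3 - Real.cos φ := by nlinarith [cos_lt φ]
  have h1' : (1:ℝ) + (1 - Real.cos φ)/2 ≠ 0 := ne_of_gt h1
  have h2' : (3:ℝ) - Real.cos φ ≠ 0 := ne_of_gt h2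
  rw [show -(Real.sqrt 3 * (1 - Real.cos φ) / (3 - Real.cos φ)) =
      (-(Real.sqrt 3 * (1 - Real.cos φ))) / (3 - Real.cos φ) from (neg_div _ _).symm]
  rw [div_div, div_eq_div_iff (by positivity) h2']
  ring

lemma cosmem {φ : ℝ} (h : φ ∈ Ioo 0 π) : -1 < Real.cos φ ∧ Real.cos φ < 1 := by
  constructor
  · have := Real.strictAntiOn_cos ⟨h.1.le, h.2.le⟩
      ⟨Real.pi_pos.le, le_refl _⟩ h.2
    rwa [Real.cos_pi] at this
  · have := Real.strictAntiOn_cos ⟨le_refl _, Real.pi_pos.le⟩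
      ⟨h.1.le, h.2.le⟩ h.1
    rwa [Real.cos_zero] at this

lemma Bc_cont : Continuous Bc := by
  have : Continuous α₂ := by
    unfold α₂
    fun_prop
  exact continuous_norm.comp this

lemma psi_cont : Continuous ψc := by
  have h := funext psi_eq
  rw [h]
  apply Continuous.neg
  apply Real.continuous_arctan.comp
  apply Continuous.div (by fun_prop) (by fun_prop)
  intro x; nlinarith [cos_lt x]

theorem Bc_psi_c_monotone_and_range :
    StrictMonoOn Bc (Ioo 0 π) ∧
      Bc '' Ioo 0 π = Ioo 1 (Real.sqrt 7) ∧
      StrictAntiOn ψc (Ioo 0 π) ∧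
      ψc '' Ioo 0 π = Ioo (-Real.arctan (Real.sqrt 3 / 2)) 0 := by
  have hpi := Real.pi_pos
  have hBc0 : Bc 0 = 1 := by rw [Bc_eq]; norm_num
  have hBcpi : Bc π = Real.sqrt 7 := by rw [Bc_eq, Real.cos_pi]; norm_num
  have hpsi0 : ψc 0 = 0 := by rw [psi_eq]; norm_num
  have hpsipi : ψc π = -Real.arctan (Real.sqrt 3 / 2) := by
    rw [psi_eq, Real.cos_pi]
    norm_num
    ring
  have hmono : StrictMonoOn Bc (Ioo 0 π) := by
    intro x hx y hy hxy
    rw [Bc_eq, Bc_eq]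
    have hc : Real.cos y < Real.cos x :=
      Real.strictAntiOn_cos ⟨hx.1.le, hx.2.le⟩ ⟨hy.1.le, hy.2.le⟩ hxy
    apply Real.sqrt_lt_sqrt (by nlinarith [cos_lt x])
    nlinarith [cos_lt x, cos_lt y]
  have hanti : StrictAntiOn ψc (Ioo 0 π) := by
    intro x hx y hy hxy
    rw [psi_eq, psi_eq]
    have hc : Real.cos y < Real.cos x :=
      Real.strictAntiOn_cos ⟨hx.1.le, hx.2.le⟩ ⟨hy.1.le, hy.2.le⟩ hxy
    apply neg_lt_neg
    apply Real.arctan_strictMono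
    have h3 : (0:ℝ) < Real.sqrt 3 := Real.sqrt_pos.mpr (by norm_num)
    rw [div_lt_div_iff₀ (by nlinarith [cos_lt x]) (by nlinarith [cos_lt y])]
    nlinarith [cos_lt x, cos_lt y]
  refine ⟨hmono, ?_, hanti, ?_⟩
  · apply Subset.antisymm
    · rintro _ ⟨φ, hφ, rfl⟩
      obtain ⟨hg, hl⟩ := cosmem hφ
      rw [Bc_eq]
      constructor
      · rw [show (1:ℝ) = Real.sqrt 1 from (Real.sqrt_one).symm]
        apply Real.sqrt_lt_sqrt (by norm_num)
        nlinarith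
      · apply Real.sqrt_lt_sqrt (by nlinarith)
        nlinarith
    · have := intermediate_value_Ioo (le_of_lt hpi) Bc_cont.continuousOn
      rwa [hBc0, hBcpi] at this
  · apply Subset.antisymm
    · rintro _ ⟨φ, hφ, rfl⟩
      obtain ⟨hg, hl⟩ := cosmem hφ
      rw [psi_eq]
      have h3 : (0:ℝ) < Real.sqrt 3 := Real.sqrt_pos.mpr (by norm_num)
      constructor
      · apply neg_lt_neg
        apply Real.arctan_strictMono
        rw [div_lt_div_iff₀ (by nlinarith) (by norm_num)]
        nlinarith
      · rw [neg_lt, neg_zero, ← Real.arctan_zero]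
        apply Real.arctan_strictMono
        exact div_pos (by nlinarith) (by nlinarith)
    · have := intermediate_value_Ioo' (le_of_lt hpi) psi_cont.continuousOn
      rwa [hpsi0, hpsipi] at this
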